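/- Let (g, ω) be a symplectic Novikov Lie algebra and ∇^ω_x y = (2/3)x·y - (1/3)y·x the associated symplectic connection. Then the Ricci tensor ric(x,y) = tr(z ↦ K(x,z)y), where K(x,y) = [∇^ω_x, ∇^ω_y] - ∇^ω_{[x,y]}, equals (2/9)·tr(ad_x ∘ ad_y). -/
import Mathlib


/-- The symplectic connection `∇^ω_x y = (2/3) x·y - (1/3) y·x` associated with an
SNLA with left-symmetric product `mul`. -/
noncomputable def snlaConnMul {g : Type*} [AddCommGroup g] [Module ℝ g]
    (mul : g →ₗ[ℝ] g →ₗ[ℝ] g) (x : g) : Module.End ℝ g :=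
  (2 / 3 : ℝ) • mul x - (3⁻¹ : ℝ) • mul.flip x

/-- The curvature `K(x,y) = [∇^ω_x, ∇^ω_y] - ∇^ω_{[x,y]}`. -/
noncomputable def snlaCurvMul {g : Type*} [LieRing g] [LieAlgebra ℝ g]
    (mul : g →ₗ[ℝ] g →ₗ[ℝ] g) (x y : g) : Module.End ℝ g :=
  snlaConnMul mul x * snlaConnMul mul y - snlaConnMul mul y * snlaConnMul mul x
    - snlaConnMul mul ⁅x, y⁆

/-- In an SNLA, the Ricci tensor `ric(x,y) = tr(z ↦ K(x,z)y)` of the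
symplectic connection `∇^ω_x y = (2/3) x·y - (1/3) y·x` equals
`(2/9)·tr(ad_x ∘ ad_y)`. -/
theorem snla_stmt_18 (g : Type*) [LieRing g] [LieAlgebra ℝ g]
    [Module.Finite ℝ g]
    (ω : g →ₗ[ℝ] g →ₗ[ℝ] ℝ)
    (hskew : ∀ x y : g, ω x y = - ω y x)
    (hnondeg : ∀ x : g, (∀ y : g, ω x y = 0) → x = 0)
    (hcocycle : ∀ x y z : g, ω ⁅x, y⁆ z + ω ⁅y, z⁆ x + ω ⁅z, x⁆ y = 0)
    (mul : g →ₗ[ℝ] g →ₗ[ℝ] g)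
    (hdef : ∀ x y z : g, ω (mul x y) z = - ω y ⁅x, z⁆)
    (hNov : ∀ x y z : g, mul (mul x y) z = mul (mul x z) y) :
    ∀ (x y : g) (T : g →ₗ[ℝ] g), (∀ z : g, T z = snlaCurvMul mul x z y) →
      LinearMap.trace ℝ g T
        = (2 / 9 : ℝ)
            * LinearMap.trace ℝ g (LieAlgebra.ad ℝ g x * LieAlgebra.ad ℝ g y) := by
  -- nondegeneracy extensionality
  have hext : ∀ a b : g, (∀ w : g, ω a w = ω b w) → a = b := by
    intro a b h
    have h0 : ∀ w : g, ω (a - b) w = 0 := by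
      intro w
      rw [map_sub, LinearMap.sub_apply, h w, sub_self]
    exact sub_eq_zero.mp (hnondeg _ h0)
  -- the product is a commutator-compatible (left-symmetric) product
  have comm : ∀ x y : g, mul x y - mul y x = ⁅x, y⁆ := by
    intro x y
    apply hext
    intro w
    rw [map_sub, LinearMap.sub_apply, hdef, hdef]
    have hc := hcocycle x y w
    have e1 : ω ⁅w, x⁆ y = ω y ⁅x, w⁆ := by
      have hwx : (⁅w, x⁆ : g) = -⁅x, w⁆ := by
        rw [← lie_skew x w, neg_neg]
      rw [hwx, hskew (-⁅x, w⁆) y, map_neg, neg_neg]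
    have e2 : ω ⁅y, w⁆ x = - ω x ⁅y, w⁆ := by rw [hskew ⁅y, w⁆ x]
    linarith
  -- left symmetry
  have leftsym : ∀ x y z : g,
      mul (mul x y) z - mul x (mul y z) = mul (mul y x) z - mul y (mul x z) := by
    intro x y z
    apply hext
    intro w
    simp only [map_sub, LinearMap.sub_apply, hdef]
    have key : (⁅mul x y, w⁆ : g) - ⁅mul y x, w⁆ = ⁅x, ⁅y, w⁆⁆ - ⁅y, ⁅x, w⁆⁆ := by
      rw [← sub_lie, comm x y, lie_lie]
    have k2 := congrArg (fun v => ω z v) key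
    simp only [map_sub] at k2
    linarith
  -- Bianchi-type cyclic identity for ω on brackets
  have hP : ∀ x y z w : g,
      ω ⁅y, z⁆ ⁅x, w⁆ + ω ⁅z, x⁆ ⁅y, w⁆ + ω ⁅x, y⁆ ⁅z, w⁆ = 0 := by
    intro x y z w
    rw [← comm y z, ← comm z x, ← comm x y]
    simp only [map_sub, LinearMap.sub_apply, hdef]
    have l1 := congrArg (fun a => ω a w) (leftsym x y z)
    have l2 := congrArg (fun a => ω a w) (leftsym y z x)
    have l3 := congrArg (fun a => ω a w) (leftsym z x y)
    have n1 := congrArg (fun a => ω a w) (hNov x y z)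
    have n2 := congrArg (fun a => ω a w) (hNov y z x)
    have n3 := congrArg (fun a => ω a w) (hNov z x y)
    simp only [map_sub, LinearMap.sub_apply, hdef] at l1 l2 l3 n1 n2 n3
    linarith
  -- the derived ideal is isotropic
  have hT0 : ∀ a b c d : g, ω ⁅a, b⁆ ⁅c, d⁆ = 0 := by
    intro a b c d
    have p1 := hP a b c d
    have p2 := hP a b d c
    have e1 : ω ⁅a, b⁆ ⁅d, c⁆ = - ω ⁅a, b⁆ ⁅c, d⁆ := by
      have hdc : (⁅d, c⁆ : g) = -⁅c, d⁆ := by rw [← lie_skew c d, neg_neg]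
      rw [hdc, map_neg]
    have e2 : ω ⁅d, a⁆ ⁅b, c⁆ = ω ⁅b, c⁆ ⁅a, d⁆ := by
      have hda : (⁅d, a⁆ : g) = -⁅a, d⁆ := by rw [← lie_skew a d, neg_neg]
      rw [hda, map_neg, LinearMap.neg_apply, hskew ⁅a, d⁆ ⁅b, c⁆, neg_neg]
    have e3 : ω ⁅b, d⁆ ⁅a, c⁆ = ω ⁅c, a⁆ ⁅b, d⁆ := by
      have hca : (⁅c, a⁆ : g) = -⁅a, c⁆ := by rw [← lie_skew a c, neg_neg]
      rw [hca, map_neg, LinearMap.neg_apply, hskew ⁅a, c⁆ ⁅b, d⁆, neg_neg]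
    linarith
  -- products with brackets vanish
  have mb : ∀ a b c : g, mul a ⁅b, c⁆ = 0 := by
    intro a b c
    apply hext _ 0
    intro w
    rw [hdef, map_zero, LinearMap.zero_apply, hT0, neg_zero]
  have hLad : ∀ a b c : g, mul a (mul b c) = mul a (mul c b) := by
    intro a b c
    have h := mb a b c
    rw [← comm b c, map_sub] at h
    exact sub_eq_zero.mp h
  -- the curvature formula K(x,z) = -(2/9) ad ⁅x,z⁆, applied to y
  have hK : ∀ x z y : g, snlaCurvMul mul x z y = (-(2 / 9) : ℝ) • ⁅(⁅x, z⁆ : g), y⁆ := by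
    intro x z y
    have n1 : mul (mul z y) x = mul (mul z x) y := hNov z y x
    have n2 : mul (mul x y) z = mul (mul x z) y := hNov x y z
    have n3 : mul (mul y z) x = mul (mul y x) z := hNov y z x
    have z1 : mul x (mul z y) = mul x (mul y z) := hLad x z y
    have z1' : mul z (mul x y) = mul z (mul y x) := hLad z x y
    have z2 : mul y ⁅x, z⁆ = 0 := mb y x z
    have ls := leftsym x z y
    have cb : mul ⁅x, z⁆ y = mul (mul x z) y - mul (mul z x) y := by
      rw [← comm x z, map_sub, LinearMap.sub_apply]
    have cb2 : (⁅(⁅x, z⁆ : g), y⁆ : g) = mul ⁅x, z⁆ y - mul y ⁅x, z⁆ :=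
      (comm _ _).symm
    simp only [snlaCurvMul, snlaConnMul, LinearMap.sub_apply, LinearMap.smul_apply,
      Module.End.mul_apply, LinearMap.flip_apply, map_sub, map_smul, cb2, cb, z2,
      smul_sub, sub_zero]
    apply hext
    intro w
    simp only [map_sub, map_smul, map_neg, LinearMap.sub_apply, LinearMap.smul_apply,
      LinearMap.neg_apply, smul_eq_mul, hdef, sub_lie, smul_lie, map_zero,
      LinearMap.zero_apply]
    have pn1 := congrArg (fun a => ω a w) n1
    have pn2 := congrArg (fun a => ω a w) n2
    have pn3 := congrArg (fun a => ω a w) n3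
    have pz1 := congrArg (fun a => ω a w) z1
    have pz1' := congrArg (fun a => ω a w) z1'
    have pls := congrArg (fun a => ω a w) ls
    simp only [map_sub, LinearMap.sub_apply, hdef] at pn1 pn2 pn3 pz1 pz1' pls
    linarith
  -- assemble
  intro x y T hT
  have hTeq : T = (2 / 9 : ℝ) • ((LieAlgebra.ad ℝ g y) ∘ₗ (LieAlgebra.ad ℝ g x)) := by
    apply LinearMap.ext
    intro z
    rw [hT z, hK x z y]
    simp only [LinearMap.smul_apply, LinearMap.comp_apply, LieAlgebra.ad_apply]
    rw [← lie_skew y ⁅x, z⁆, smul_neg, neg_smul]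
  rw [hTeq, map_smul, smul_eq_mul]
  congr 1
  rw [show (LieAlgebra.ad ℝ g y) ∘ₗ (LieAlgebra.ad ℝ g x)
      = (LieAlgebra.ad ℝ g y) * (LieAlgebra.ad ℝ g x) from rfl,
    LinearMap.trace_mul_comm]
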